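/- For (j,k) in [n]² with j ≠ k, Cov(X_{j,π(j)}, X_{k,π(k)}) = (1/(n-1)) ( p̄_{j,·} p̄_{k,·} − (1/n) Σ_{r=1}^n p_{j,r} p_{k,r} ), where p̄_{j,·} = (1/n) Σ_r p_{j,r}. -/

import Mathlib

open Finset Real

/-- Probability weight of an outcome `x` of the Bernoulli matrix `(X_{j,r})` with
success probabilities `p`, the entries being independent. -/
noncomputable def bw (n : ℕ) (p : Fin n → Fin n → ℝ) (x : Fin n → Fin n → Bool) : ℝ :=
  ∏ j : Fin n, ∏ r : Fin n, if x j r then p j r else 1 - p j r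

/-- Expectation of `f (X, π)` where the Bernoulli matrix `X` (independent entries with
success probabilities `p`) and the uniformly distributed random permutation `π` are
independent. -/
noncomputable def dExp (n : ℕ) (p : Fin n → Fin n → ℝ)
    (f : (Fin n → Fin n → Bool) → Equiv.Perm (Fin n) → ℝ) : ℝ :=
  ((n.factorial : ℝ))⁻¹ *
    ∑ σ : Equiv.Perm (Fin n), ∑ x : Fin n → Fin n → Bool, bw n p x * f x σ

/-- The random diagonal sum `S_n = ∑ j, X_{j,π(j)}` as a function of the outcome. -/
noncomputable def dSum (n : ℕ) (x : Fin n → Fin n → Bool) (σ : Equiv.Perm (Fin n)) : ℝ :=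
  ∑ j : Fin n, if x j (σ j) then (1:ℝ) else 0

/-- The variance of the random diagonal sum `S_n`. -/
noncomputable def dVar (n : ℕ) (p : Fin n → Fin n → ℝ) : ℝ :=
  dExp n p (fun x σ => (dSum n x σ)^2) - (dExp n p (dSum n))^2

lemma prod_boolfun {ι : Type*} [Fintype ι] [DecidableEq ι] (g : ι → Bool → ℝ) :
    ∑ x : ι → Bool, ∏ i, g i (x i) = ∏ i, (g i true + g i false) := by
  classical
  have h := Finset.prod_univ_sum (fun _ : ι => (Finset.univ : Finset Bool)) (fun i t => g i t)
  rw [Fintype.piFinset_univ] at h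
  simpa using h.symm

lemma sum_bw_single (m : ℕ) (p : Fin m → Fin m → ℝ) (a r : Fin m) :
    ∑ x : Fin m → Fin m → Bool, bw m p x * (if x a r then (1:ℝ) else 0) = p a r := by
  classical
  set g : Fin m × Fin m → Bool → ℝ := fun i t =>
    if i = (a, r) then (if t then p a r else 0)
    else (if t then p i.1 i.2 else 1 - p i.1 i.2) with hg
  rw [← Equiv.sum_comp (Equiv.curry (Fin m) (Fin m) Bool)
      (fun x => bw m p x * (if x a r then (1:ℝ) else 0))]
  have hrw : ∀ y : Fin m × Fin m → Bool,
      bw m p (Equiv.curry (Fin m) (Fin m) Bool y) *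
        (if Equiv.curry (Fin m) (Fin m) Bool y a r then (1:ℝ) else 0)
      = ∏ i : Fin m × Fin m, g i (y i) := by
    intro y
    have hb : bw m p (Equiv.curry (Fin m) (Fin m) Bool y)
        = ∏ i : Fin m × Fin m, (if y i then p i.1 i.2 else 1 - p i.1 i.2) := by
      rw [Fintype.prod_prod_type (fun i : Fin m × Fin m => if y i then p i.1 i.2 else 1 - p i.1 i.2)]
      rfl
    rw [hb, ← Finset.mul_prod_erase univ (fun i : Fin m × Fin m => (if y i then p i.1 i.2 else 1 - p i.1 i.2)) (Finset.mem_univ (a,r)),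
      ← Finset.mul_prod_erase univ (fun i => g i (y i)) (Finset.mem_univ (a,r))]
    have hrest : ∏ i ∈ univ.erase (a,r), g i (y i)
        = ∏ i ∈ univ.erase (a,r), (if y i then p i.1 i.2 else 1 - p i.1 i.2) := by
      refine Finset.prod_congr rfl fun i hi => ?_
      rw [hg]; simp [Finset.mem_erase.mp hi |>.1]
    rw [hrest, mul_right_comm]
    congr 1
    show (if y (a,r) then p a r else 1 - p a r) * (if y (a, r) then (1:ℝ) else 0) = g (a,r) (y (a,r))
    cases h : y (a, r) <;> simp [hg, h]
  rw [Finset.sum_congr rfl fun y _ => hrw y, prod_boolfun g,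
    ← Finset.mul_prod_erase univ (fun i => g i true + g i false) (Finset.mem_univ (a,r))]
  have : ∏ i ∈ univ.erase (a,r), (g i true + g i false) = 1 := by
    refine Finset.prod_eq_one fun i hi => ?_
    rw [hg]; simp [Finset.mem_erase.mp hi |>.1]
  rw [this, hg]; simp

lemma sum_bw_pair (m : ℕ) (p : Fin m → Fin m → ℝ) (a c r s : Fin m) (hac : a ≠ c) :
    ∑ x : Fin m → Fin m → Bool,
      bw m p x * ((if x a r then (1:ℝ) else 0) * (if x c s then (1:ℝ) else 0))
      = p a r * p c s := by
  classical
  have hne : ((c, s) : Fin m × Fin m) ≠ (a, r) := by simp [Prod.ext_iff, hac.symm]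
  have hmem : ((c, s) : Fin m × Fin m) ∈ (univ : Finset (Fin m × Fin m)).erase (a, r) :=
    Finset.mem_erase.mpr ⟨hne, Finset.mem_univ _⟩
  set g : Fin m × Fin m → Bool → ℝ := fun i t =>
    if i = (a, r) then (if t then p a r else 0)
    else if i = (c, s) then (if t then p c s else 0)
    else (if t then p i.1 i.2 else 1 - p i.1 i.2) with hg
  rw [← Equiv.sum_comp (Equiv.curry (Fin m) (Fin m) Bool)
      (fun x => bw m p x * ((if x a r then (1:ℝ) else 0) * (if x c s then (1:ℝ) else 0)))]
  have hrw : ∀ y : Fin m × Fin m → Bool,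
      bw m p (Equiv.curry (Fin m) (Fin m) Bool y) *
        ((if Equiv.curry (Fin m) (Fin m) Bool y a r then (1:ℝ) else 0) *
          (if Equiv.curry (Fin m) (Fin m) Bool y c s then (1:ℝ) else 0))
      = ∏ i : Fin m × Fin m, g i (y i) := by
    intro y
    have hb : bw m p (Equiv.curry (Fin m) (Fin m) Bool y)
        = ∏ i : Fin m × Fin m, (if y i then p i.1 i.2 else 1 - p i.1 i.2) := by
      rw [Fintype.prod_prod_type (fun i : Fin m × Fin m => if y i then p i.1 i.2 else 1 - p i.1 i.2)]
      rfl
    rw [hb,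
      ← Finset.mul_prod_erase univ (fun i : Fin m × Fin m => (if y i then p i.1 i.2 else 1 - p i.1 i.2)) (Finset.mem_univ (a,r)),
      ← Finset.mul_prod_erase _ (fun i : Fin m × Fin m => (if y i then p i.1 i.2 else 1 - p i.1 i.2)) hmem,
      ← Finset.mul_prod_erase univ (fun i => g i (y i)) (Finset.mem_univ (a,r)),
      ← Finset.mul_prod_erase _ (fun i => g i (y i)) hmem]
    have hrest : ∏ i ∈ (univ.erase (a,r)).erase (c,s), g i (y i)
        = ∏ i ∈ (univ.erase (a,r)).erase (c,s), (if y i then p i.1 i.2 else 1 - p i.1 i.2) := by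
      refine Finset.prod_congr rfl fun i hi => ?_
      obtain ⟨h1, h2⟩ := Finset.mem_erase.mp hi
      rw [hg]; simp [h1, Finset.mem_erase.mp h2 |>.1]
    rw [hrest]
    have h1 : g (a,r) (y (a,r)) = (if y (a,r) then p a r else 1 - p a r) * (if y (a, r) then (1:ℝ) else 0) := by
      cases h : y (a, r) <;> simp [hg, h]
    have h2 : g (c,s) (y (c,s)) = (if y (c,s) then p c s else 1 - p c s) * (if y (c, s) then (1:ℝ) else 0) := by
      cases h : y (c, s) <;> simp [hg, h, hne]
    rw [h1, h2]
    simp only [Equiv.curry_apply, Function.curry]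
    ring
  rw [Finset.sum_congr rfl fun y _ => hrw y, prod_boolfun g,
    ← Finset.mul_prod_erase univ (fun i => g i true + g i false) (Finset.mem_univ (a,r)),
    ← Finset.mul_prod_erase _ (fun i => g i true + g i false) hmem]
  have : ∏ i ∈ (univ.erase (a,r)).erase (c,s), (g i true + g i false) = 1 := by
    refine Finset.prod_eq_one fun i hi => ?_
    obtain ⟨h1, h2⟩ := Finset.mem_erase.mp hi
    rw [hg]; simp [h1, Finset.mem_erase.mp h2 |>.1]
  rw [this, hg]; simp [hne]

lemma exists_perm_two {α : Type*} [DecidableEq α] {r s r' s' : α} (hrs : r ≠ s) (h' : r' ≠ s') :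
    ∃ τ : Equiv.Perm α, τ r = r' ∧ τ s = s' := by
  refine ⟨(Equiv.swap (Equiv.swap r r' s) s') * (Equiv.swap r r'), ?_, ?_⟩
  · have h1 : Equiv.swap r r' s ≠ r' := by
      intro h
      exact hrs ((Equiv.swap r r').injective (h.trans (Equiv.swap_apply_left r r').symm)).symm
    simp only [Equiv.Perm.mul_apply, Equiv.swap_apply_left]
    exact Equiv.swap_apply_of_ne_of_ne (Ne.symm h1) h'
  · simp only [Equiv.Perm.mul_apply, Equiv.swap_apply_left]

lemma card_fiber_one {n : ℕ} (a : Fin n) (r r' : Fin n) :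
    (univ.filter fun σ : Equiv.Perm (Fin n) => σ a = r).card
      = (univ.filter fun σ : Equiv.Perm (Fin n) => σ a = r').card := by
  refine Finset.card_bij' (fun σ _ => Equiv.swap r r' * σ) (fun σ _ => Equiv.swap r r' * σ)
    ?_ ?_ ?_ ?_
  · intro σ hσ
    simp only [Finset.mem_filter, Finset.mem_univ, true_and] at hσ ⊢
    simp [Equiv.Perm.mul_apply, hσ]
  · intro σ hσ
    simp only [Finset.mem_filter, Finset.mem_univ, true_and] at hσ ⊢
    simp [Equiv.Perm.mul_apply, hσ, Equiv.swap_apply_right]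
  · intro σ _; simp [← mul_assoc]
  · intro σ _; simp [← mul_assoc]

lemma card_fiber_two {n : ℕ} {j k : Fin n} {r s r' s' : Fin n}
    (hrs : r ≠ s) (h' : r' ≠ s') :
    (univ.filter fun σ : Equiv.Perm (Fin n) => (σ j, σ k) = (r, s)).card
      = (univ.filter fun σ : Equiv.Perm (Fin n) => (σ j, σ k) = (r', s')).card := by
  obtain ⟨τ, hτ1, hτ2⟩ := exists_perm_two hrs h'
  refine Finset.card_bij' (fun σ _ => τ * σ) (fun σ _ => τ⁻¹ * σ) ?_ ?_ ?_ ?_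
  · intro σ hσ
    simp only [Finset.mem_filter, Finset.mem_univ, true_and, Prod.ext_iff] at hσ ⊢
    simp [Equiv.Perm.mul_apply, hσ.1, hσ.2, hτ1, hτ2]
  · intro σ hσ
    simp only [Finset.mem_filter, Finset.mem_univ, true_and, Prod.ext_iff] at hσ ⊢
    constructor
    · rw [Equiv.Perm.mul_apply, hσ.1, ← hτ1]; simp
    · rw [Equiv.Perm.mul_apply, hσ.2, ← hτ2]; simp
  · intro σ _; simp [← mul_assoc]
  · intro σ _; simp [← mul_assoc]

theorem cov_diag_entries (n : ℕ) (hn : 2 ≤ n) (p : Fin n → Fin n → ℝ)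
    (hp : ∀ j r, p j r ∈ Set.Icc (0:ℝ) 1) (j k : Fin n) (hjk : j ≠ k) :
    dExp n p (fun x σ =>
        (if x j (σ j) then (1:ℝ) else 0) * (if x k (σ k) then (1:ℝ) else 0))
      - dExp n p (fun x σ => if x j (σ j) then (1:ℝ) else 0) *
        dExp n p (fun x σ => if x k (σ k) then (1:ℝ) else 0)
    = (1 / ((n:ℝ) - 1)) *
        (((n:ℝ)⁻¹ * ∑ r : Fin n, p j r) * ((n:ℝ)⁻¹ * ∑ r : Fin n, p k r)
          - (n:ℝ)⁻¹ * ∑ r : Fin n, p j r * p k r) := by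

  classical
  have h2 : (2:ℝ) ≤ (n:ℝ) := by exact_mod_cast hn
  have hn0 : (n:ℝ) ≠ 0 := by linarith
  have hn1 : (n:ℝ) - 1 ≠ 0 := by linarith
  have hf0 : (n.factorial : ℝ) ≠ 0 := by
    exact_mod_cast Nat.factorial_ne_zero n
  -- notation for fiber cardinalities
  set C1 : Fin n → ℝ := fun a => ((univ.filter fun σ : Equiv.Perm (Fin n) => σ a = a).card : ℝ)
    with hC1
  set C2 : ℝ := ((univ.filter fun σ : Equiv.Perm (Fin n) => (σ j, σ k) = (j, k)).card : ℝ)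
    with hC2
  -- single fiber count
  have hcard1 : ∀ a : Fin n, C1 a * n = (n.factorial : ℝ) := by
    intro a
    have h := Finset.card_eq_sum_card_fiberwise
      (f := fun σ : Equiv.Perm (Fin n) => σ a) (s := univ) (t := univ)
      (fun σ _ => mem_univ _)
    have h2' : (univ : Finset (Equiv.Perm (Fin n))).card = n.factorial := by
      rw [Finset.card_univ, Fintype.card_perm, Fintype.card_fin]
    rw [h2'] at h
    have h3 : ∀ r : Fin n, (univ.filter fun σ : Equiv.Perm (Fin n) => σ a = r).card
        = (univ.filter fun σ : Equiv.Perm (Fin n) => σ a = a).card :=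
      fun r => card_fiber_one a r a
    rw [Finset.sum_congr rfl (fun r _ => h3 r), Finset.sum_const, Finset.card_univ,
      Fintype.card_fin, smul_eq_mul] at h
    have h' : (n.factorial : ℝ) = (n:ℝ) * ((univ.filter fun σ : Equiv.Perm (Fin n) => σ a = a).card : ℝ) := by
      exact_mod_cast h
    rw [hC1]
    simp only []
    rw [h']; ring
  -- pair fiber count
  have hfib2 : ∀ r s : Fin n, ((univ.filter fun σ : Equiv.Perm (Fin n) => (σ j, σ k) = (r, s)).card : ℝ)
      = if r = s then 0 else C2 := by
    intro r s
    by_cases hrs : r = s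
    · subst hrs
      rw [if_pos rfl]
      norm_cast
      rw [Finset.card_eq_zero, Finset.filter_eq_empty_iff]
      intro σ _
      simp only [Prod.mk.injEq, not_and]
      intro h1 h2
      exact hjk (σ.injective (h1.trans h2.symm))
    · rw [if_neg hrs, hC2]
      exact_mod_cast card_fiber_two hrs hjk
  have hcard2 : C2 * ((n:ℝ) * ((n:ℝ) - 1)) = (n.factorial : ℝ) := by
    have h := Finset.card_eq_sum_card_fiberwise
      (f := fun σ : Equiv.Perm (Fin n) => (σ j, σ k)) (s := univ) (t := univ)
      (fun σ _ => mem_univ _)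
    have h2' : (univ : Finset (Equiv.Perm (Fin n))).card = n.factorial := by
      rw [Finset.card_univ, Fintype.card_perm, Fintype.card_fin]
    rw [h2'] at h
    have h4 : (n.factorial : ℝ)
        = ∑ q : Fin n × Fin n, ((univ.filter fun σ : Equiv.Perm (Fin n) => (σ j, σ k) = q).card : ℝ) := by
      exact_mod_cast congrArg (fun m : ℕ => (m : ℝ)) h
    rw [h4, Fintype.sum_prod_type]
    have h5 : ∀ r : Fin n, ∑ s : Fin n,
        ((univ.filter fun σ : Equiv.Perm (Fin n) => (σ j, σ k) = (r, s)).card : ℝ)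
        = C2 * ((n:ℝ) - 1) := by
      intro r
      rw [Finset.sum_congr rfl (fun s _ => hfib2 r s)]
      have he : ∀ s : Fin n, (if r = s then (0:ℝ) else C2) = C2 - (if r = s then C2 else 0) := by
        intro s; by_cases h : r = s <;> simp [h]
      rw [Finset.sum_congr rfl (fun s _ => he s), Finset.sum_sub_distrib, Finset.sum_const,
        Finset.sum_ite_eq, if_pos (mem_univ r), card_univ, Fintype.card_fin, nsmul_eq_mul]
      ring
    rw [Finset.sum_congr rfl (fun r _ => h5 r), Finset.sum_const, card_univ, Fintype.card_fin,
      nsmul_eq_mul]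
    ring
  -- expectation rewrites
  have eJK : dExp n p (fun x σ =>
      (if x j (σ j) then (1:ℝ) else 0) * (if x k (σ k) then (1:ℝ) else 0))
      = (n.factorial:ℝ)⁻¹ * ∑ σ : Equiv.Perm (Fin n), p j (σ j) * p k (σ k) := by
    rw [dExp]; congr 1
    exact Finset.sum_congr rfl fun σ _ => sum_bw_pair n p j k (σ j) (σ k) hjk
  have eS : ∀ a : Fin n, dExp n p (fun x σ => if x a (σ a) then (1:ℝ) else 0)
      = (n.factorial:ℝ)⁻¹ * ∑ σ : Equiv.Perm (Fin n), p a (σ a) := by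
    intro a; rw [dExp]; congr 1
    exact Finset.sum_congr rfl fun σ _ => sum_bw_single n p a (σ a)
  -- single sums over permutations
  have hsum1 : ∀ a : Fin n, ∑ σ : Equiv.Perm (Fin n), p a (σ a) = C1 a * ∑ r, p a r := by
    intro a
    rw [← Finset.sum_fiberwise univ (fun σ : Equiv.Perm (Fin n) => σ a) (fun σ => p a (σ a))]
    have hr : ∀ r : Fin n, ∑ σ ∈ univ.filter (fun σ : Equiv.Perm (Fin n) => σ a = r), p a (σ a)
        = C1 a * p a r := by
      intro r
      rw [Finset.sum_congr rfl (fun σ hσ => by rw [(Finset.mem_filter.mp hσ).2]),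
        Finset.sum_const, nsmul_eq_mul, card_fiber_one a r a]
    rw [Finset.sum_congr rfl (fun r _ => hr r), ← Finset.mul_sum]
  -- pair sum over permutations
  have hsum2 : ∑ σ : Equiv.Perm (Fin n), p j (σ j) * p k (σ k)
      = C2 * ((∑ r, p j r) * (∑ r, p k r) - ∑ r, p j r * p k r) := by
    rw [← Finset.sum_fiberwise univ (fun σ : Equiv.Perm (Fin n) => (σ j, σ k))
      (fun σ => p j (σ j) * p k (σ k)), Fintype.sum_prod_type]
    have h6 : ∀ r s : Fin n, ∑ σ ∈ univ.filter (fun σ : Equiv.Perm (Fin n) => (σ j, σ k) = (r, s)),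
        p j (σ j) * p k (σ k) = (if r = s then 0 else C2) * (p j r * p k s) := by
      intro r s
      have hmem : ∀ σ ∈ univ.filter (fun σ : Equiv.Perm (Fin n) => (σ j, σ k) = (r, s)),
          p j (σ j) * p k (σ k) = p j r * p k s := by
        intro σ hσ
        have h := (Finset.mem_filter.mp hσ).2
        rw [Prod.mk.injEq] at h
        rw [h.1, h.2]
      rw [Finset.sum_congr rfl hmem, Finset.sum_const, nsmul_eq_mul, hfib2]
    have h7 : ∀ r : Fin n, ∑ s : Fin n, (if r = s then (0:ℝ) else C2) * (p j r * p k s)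
        = C2 * (p j r * ∑ s, p k s) - C2 * (p j r * p k r) := by
      intro r
      have he : ∀ s : Fin n, (if r = s then (0:ℝ) else C2) * (p j r * p k s)
          = C2 * (p j r * p k s) - (if r = s then C2 * (p j r * p k r) else 0) := by
        intro s; by_cases h : r = s
        · subst h; simp
        · simp [h]
      rw [Finset.sum_congr rfl (fun s _ => he s), Finset.sum_sub_distrib,
        Finset.sum_ite_eq, if_pos (mem_univ r)]
      congr 1
      rw [← Finset.mul_sum]
      congr 1
      rw [← Finset.mul_sum]
    rw [Finset.sum_congr rfl
      (fun r _ => (Finset.sum_congr rfl (fun s _ => h6 r s)).trans (h7 r)),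
      Finset.sum_sub_distrib]
    have hA : ∑ r : Fin n, C2 * (p j r * ∑ s, p k s)
        = C2 * ((∑ r, p j r) * (∑ r, p k r)) := by
      rw [← Finset.mul_sum, ← Finset.sum_mul]
    have hB : ∑ r : Fin n, C2 * (p j r * p k r) = C2 * ∑ r, p j r * p k r := by
      rw [← Finset.mul_sum]
    rw [hA, hB, ← mul_sub]
  -- final algebra
  rw [eJK, eS j, eS k, hsum1 j, hsum1 k, hsum2]
  have e1 : C1 j = (n.factorial:ℝ) / n := by rw [eq_div_iff hn0]; exact hcard1 j
  have e2 : C1 k = (n.factorial:ℝ) / n := by rw [eq_div_iff hn0]; exact hcard1 k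
  have e3 : C2 = (n.factorial:ℝ) / ((n:ℝ) * ((n:ℝ) - 1)) := by
    rw [eq_div_iff (mul_ne_zero hn0 hn1)]; exact hcard2
  rw [e1, e2, e3]
  field_simp
  ring
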